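/- The number of subgroups of $\mathbb{Z}^k$ of finite index $n$, summed with weight $n^{-s}$, equals $\zeta(s)\zeta(s-1)\cdots\zeta(s-k+1)$; formally, for real $s > k$, $\sum_{H \subseteq \mathbb{Z}^k,\ [\mathbb{Z}^k:H]<\infty} [\mathbb{Z}^k:H]^{-s} = \prod_{i=0}^{k-1}\zeta(s-i)$. -/

import Mathlib

open AddSubgroup

namespace SubZeta

variable {A : Type*} [AddCommGroup A]

/-- Subgroup of `A × ℤ` from data `(H₀, d, w)`. -/
def build (H₀ : AddSubgroup A) (d : ℕ+) (w : A) : AddSubgroup (A × ℤ) where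
  carrier := {p | ∃ m : ℤ, p.2 = m * d ∧ p.1 - m • w ∈ H₀}
  zero_mem' := ⟨0, by simp, by simpa using zero_mem H₀⟩
  add_mem' := by
    rintro p q ⟨m, hm, hm'⟩ ⟨n, hn, hn'⟩
    refine ⟨m + n, by simp [hm, hn]; ring, ?_⟩
    have : p.1 + q.1 - (m + n) • w = (p.1 - m • w) + (q.1 - n • w) := by
      rw [add_zsmul]; abel
    rw [Prod.fst_add, this]
    exact add_mem hm' hn'
  neg_mem' := by
    rintro p ⟨m, hm, hm'⟩
    refine ⟨-m, by simp [hm], ?_⟩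
    have : -p.1 - (-m) • w = -(p.1 - m • w) := by rw [neg_zsmul]; abel
    rw [Prod.fst_neg, this]
    exact neg_mem hm'

lemma mem_build {H₀ : AddSubgroup A} {d : ℕ+} {w : A} {p : A × ℤ} :
    p ∈ build H₀ d w ↔ ∃ m : ℤ, p.2 = m * d ∧ p.1 - m • w ∈ H₀ := Iff.rfl

lemma build_congr {H₀ : AddSubgroup A} {d : ℕ+} {w w' : A} (h : w - w' ∈ H₀) :
    build H₀ d w = build H₀ d w' := by
  ext p
  rw [mem_build, mem_build]
  constructor <;> rintro ⟨m, hm, hm'⟩ <;> refine ⟨m, hm, ?_⟩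
  · have : p.1 - m • w' = (p.1 - m • w) + m • (w - w') := by rw [smul_sub]; abel
    rw [this]; exact add_mem hm' (zsmul_mem h m)
  · have : p.1 - m • w = (p.1 - m • w') - m • (w - w') := by rw [smul_sub]; abel
    rw [this]; exact sub_mem hm' (zsmul_mem h m)

lemma comap_inl_build (H₀ : AddSubgroup A) (d : ℕ+) (w : A) :
    (build H₀ d w).comap (AddMonoidHom.inl A ℤ) = H₀ := by
  ext a
  simp only [mem_comap, AddMonoidHom.inl_apply, mem_build]
  constructor
  · rintro ⟨m, hm, hm'⟩
    have hm0 : m = 0 := by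
      have : (d : ℤ) ≠ 0 := by exact_mod_cast d.ne_zero
      rcases mul_eq_zero.mp hm.symm with h | h
      · exact h
      · exact absurd h this
    simpa [hm0] using hm'
  · intro ha
    exact ⟨0, by simp, by simpa using ha⟩

lemma self_mem_build (H₀ : AddSubgroup A) (d : ℕ+) (w : A) :
    (w, (d : ℤ)) ∈ build H₀ d w :=
  ⟨1, by simp, by simpa using zero_mem H₀⟩

end SubZeta

namespace SubZeta

variable {A : Type*} [AddCommGroup A]

/-- Auxiliary map used to compute the index of `build`. -/
private def bf (H₀ : AddSubgroup A) (d : ℕ+) (w : A) (p : A × ℤ) : (A ⧸ H₀) × ZMod d :=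
  (QuotientAddGroup.mk (p.1 - (p.2 / (d : ℤ)) • w), (p.2 : ZMod d))

private lemma bf_respects (H₀ : AddSubgroup A) (d : ℕ+) (w : A) (p q : A × ℤ)
    (h : -p + q ∈ build H₀ d w) : bf H₀ d w p = bf H₀ d w q := by
  obtain ⟨m, hm, hm'⟩ := h
  have hd : (d : ℤ) ≠ 0 := by exact_mod_cast d.ne_zero
  have hq2 : q.2 = p.2 + m * d := by
    have h2 := hm
    simp only [Prod.snd_add, Prod.snd_neg] at h2
    linarith
  have hdiv : q.2 / (d : ℤ) = p.2 / (d : ℤ) + m := by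
    rw [hq2, Int.add_mul_ediv_right _ _ hd]
  have hq1 : q.1 - p.1 - m • w ∈ H₀ := by
    have h1 := hm'
    simp only [Prod.fst_add, Prod.fst_neg] at h1
    have : -p.1 + q.1 - m • w = q.1 - p.1 - m • w := by abel
    rwa [this] at h1
  unfold bf
  refine Prod.ext ?_ ?_
  · rw [QuotientAddGroup.eq]
    have : -(p.1 - (p.2 / (d:ℤ)) • w) + (q.1 - (q.2 / (d:ℤ)) • w)
        = q.1 - p.1 - m • w := by
      rw [hdiv, add_zsmul]; abel
    rw [this]; exact hq1
  · show (p.2 : ZMod d) = (q.2 : ZMod d)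
    rw [hq2]; push_cast [ZMod.natCast_self]; ring

/-- The quotient by `build H₀ d w` is `(A ⧸ H₀) × ZMod d`. -/
noncomputable def buildQuotEquiv (H₀ : AddSubgroup A) (d : ℕ+) (w : A) :
    ((A × ℤ) ⧸ build H₀ d w) ≃ (A ⧸ H₀) × ZMod d := by
  refine Equiv.ofBijective
    (fun x => Quotient.liftOn' x (bf H₀ d w) (fun p q h => ?_)) ⟨?_, ?_⟩
  · exact bf_respects H₀ d w p q (QuotientAddGroup.leftRel_apply.mp h)
  · rintro ⟨p⟩ ⟨q⟩ h
    change bf H₀ d w p = bf H₀ d w q at h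
    have hd : (d : ℤ) ≠ 0 := by exact_mod_cast d.ne_zero
    obtain ⟨h1, h2⟩ := Prod.ext_iff.mp h
    apply Quotient.sound'
    rw [QuotientAddGroup.leftRel_apply]
    have h2' : ((q.2 - p.2 : ℤ) : ZMod d) = 0 := by push_cast; rw [sub_eq_zero]; exact h2.symm
    have hdvd : ((d : ℕ) : ℤ) ∣ q.2 - p.2 := (ZMod.intCast_zmod_eq_zero_iff_dvd _ _).mp h2'
    obtain ⟨m, hm⟩ := hdvd
    have hq2 : q.2 = p.2 + m * (d : ℤ) := by rw [mul_comm] at hm; linarith [hm]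
    have hdiv : q.2 / (d : ℤ) = p.2 / (d : ℤ) + m := by
      rw [hq2, Int.add_mul_ediv_right _ _ hd]
    refine ⟨m, by simp [hq2], ?_⟩
    have h1' := QuotientAddGroup.eq.mp h1
    have heq : -(p.1 - (p.2 / (d:ℤ)) • w) + (q.1 - (q.2 / (d:ℤ)) • w)
        = (-p + q).1 - m • w := by
      rw [hdiv, add_zsmul]
      simp only [Prod.fst_add, Prod.fst_neg]
      abel
    rw [heq] at h1'
    exact h1'
  · rintro ⟨c, r⟩
    obtain ⟨a, rfl⟩ := QuotientAddGroup.mk_surjective c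
    haveI : NeZero (d : ℕ) := ⟨d.ne_zero⟩
    refine ⟨QuotientAddGroup.mk (a, (r.val : ℤ)), ?_⟩
    have hr : ((r.val : ℤ)) / (d : ℤ) = 0 := by
      apply Int.ediv_eq_zero_of_lt
      · positivity
      · exact_mod_cast r.val_lt
    change bf H₀ d w (a, (r.val : ℤ)) = _
    unfold bf
    refine Prod.ext ?_ ?_
    · show QuotientAddGroup.mk (a - ((r.val : ℤ) / (d:ℤ)) • w) = _
      rw [hr, zero_zsmul, sub_zero]
    · show (((r.val : ℕ) : ℤ) : ZMod d) = r
      push_cast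
      exact ZMod.natCast_rightInverse r

lemma index_build (H₀ : AddSubgroup A) (d : ℕ+) (w : A) :
    (build H₀ d w).index = H₀.index * d := by
  rw [AddSubgroup.index, Nat.card_congr (buildQuotEquiv H₀ d w), Nat.card_prod,
    Nat.card_zmod, AddSubgroup.index]

end SubZeta

namespace SubZeta

variable {A : Type*} [AddCommGroup A]

lemma exists_build (H : AddSubgroup (A × ℤ)) (hH : H.index ≠ 0) :
    ∃ (d : ℕ+) (w : A), H = build (H.comap (AddMonoidHom.inl A ℤ)) d w := by
  -- the image of H under the second projection is a nontrivial subgroup of ℤ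
  obtain ⟨g, hg⟩ := Int.subgroup_cyclic (H.map (AddMonoidHom.snd A ℤ))
  rw [← AddSubgroup.zmultiples_eq_closure] at hg
  have hg0 : g ≠ 0 := by
    rintro rfl
    apply hH
    have hle : H ≤ (⊤ : AddSubgroup A).prod (⊥ : AddSubgroup ℤ) := by
      intro p hp
      have : p.2 ∈ H.map (AddMonoidHom.snd A ℤ) := ⟨p, hp, rfl⟩
      rw [hg] at this
      simp only [AddSubgroup.zmultiples_zero_eq_bot, AddSubgroup.mem_bot] at this
      exact ⟨trivial, this⟩
    have : ((⊤ : AddSubgroup A).prod (⊥ : AddSubgroup ℤ)).index = 0 := by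
      rw [AddSubgroup.index_prod, AddSubgroup.index_bot, Nat.card_eq_zero_of_infinite, mul_zero]
    exact Nat.eq_zero_of_zero_dvd (this ▸ AddSubgroup.index_dvd_of_le hle)
  set d : ℕ+ := ⟨g.natAbs, Int.natAbs_pos.mpr hg0⟩ with hd
  have hdg : ((d : ℕ) : ℤ) ∈ H.map (AddMonoidHom.snd A ℤ) := by
    rw [hg, AddSubgroup.mem_zmultiples_iff]
    exact ⟨Int.sign g, by rw [smul_eq_mul, mul_comm, Int.mul_sign_self]; rfl⟩
  obtain ⟨⟨w, n⟩, hwn, hn⟩ := hdg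
  refine ⟨d, w, ?_⟩
  have hwd : (w, ((d : ℕ) : ℤ)) ∈ H := by rwa [show ((d:ℕ):ℤ) = n from hn.symm]
  ext p
  rw [mem_build]
  constructor
  · intro hp
    have hp2 : p.2 ∈ H.map (AddMonoidHom.snd A ℤ) := ⟨p, hp, rfl⟩
    rw [hg, AddSubgroup.mem_zmultiples_iff] at hp2
    obtain ⟨m', hm'⟩ := hp2
    have hdvd : ((d : ℕ) : ℤ) ∣ p.2 := by
      have : g ∣ p.2 := ⟨m', by rw [← hm', smul_eq_mul, mul_comm]⟩
      rwa [show ((d:ℕ):ℤ) = g.natAbs from rfl, Int.natAbs_dvd]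
    obtain ⟨m, hm⟩ := hdvd
    refine ⟨m, by rw [hm, mul_comm], ?_⟩
    have : (p.1 - m • w, (0 : ℤ)) = p - m • (w, ((d : ℕ) : ℤ)) := by
      refine Prod.ext rfl ?_
      simp [hm, mul_comm]
    simp only [AddSubgroup.mem_comap, AddMonoidHom.inl_apply]
    show (p.1 - m • w, (0:ℤ)) ∈ H
    rw [this]
    exact sub_mem hp (zsmul_mem hwd m)
  · rintro ⟨m, hm, hm'⟩
    simp only [AddSubgroup.mem_comap, AddMonoidHom.inl_apply] at hm'
    have : p = (p.1 - m • w, (0:ℤ)) + m • (w, ((d : ℕ) : ℤ)) := by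
      refine Prod.ext (by simp) ?_
      simp [hm, mul_comm]
    rw [this]
    exact add_mem hm' (zsmul_mem hwd m)

end SubZeta

namespace SubZeta

variable (A : Type*) [AddCommGroup A]

/-- Parameter space for finite-index subgroups of `A × ℤ`. -/
def SigT := Σ H₀ : {H₀ : AddSubgroup A // H₀.index ≠ 0}, ℕ+ × (A ⧸ (H₀ : AddSubgroup A))

variable {A}

noncomputable def bijF : SigT A → {H : AddSubgroup (A × ℤ) // H.index ≠ 0} :=
  fun t => ⟨build t.1.1 t.2.1 t.2.2.out, by
    rw [index_build]
    exact mul_ne_zero t.1.2 (by exact_mod_cast t.2.1.ne_zero)⟩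

lemma bijF_injective : Function.Injective (bijF (A := A)) := by
  rintro ⟨⟨H₀, h₀⟩, d₁, c₁⟩ ⟨⟨H₀', h₀'⟩, d₂, c₂⟩ h
  have hval : build H₀ d₁ c₁.out = build H₀' d₂ c₂.out := congrArg Subtype.val h
  have h0 : H₀ = H₀' := by
    rw [← comap_inl_build H₀ d₁ c₁.out, ← comap_inl_build H₀' d₂ c₂.out, hval]
  subst h0
  have hd : d₁ = d₂ := by
    have hidx := congrArg AddSubgroup.index hval
    rw [index_build, index_build] at hidx
    exact PNat.coe_injective (Nat.eq_of_mul_eq_mul_left (Nat.pos_of_ne_zero h₀) hidx)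
  subst hd
  have hc : c₁ = c₂ := by
    have hm : ((c₁.out, ((d₁ : ℕ) : ℤ)) : A × ℤ) ∈ build H₀ d₁ c₂.out := by
      rw [← hval]; exact self_mem_build _ _ _
    obtain ⟨m, hm1, hm2⟩ := hm
    have hd0 : ((d₁ : ℕ) : ℤ) ≠ 0 := by exact_mod_cast d₁.ne_zero
    have hm1' : m = 1 := by
      have : m * ((d₁ : ℕ) : ℤ) = 1 * ((d₁ : ℕ) : ℤ) := by
        simpa using hm1.symm
      exact mul_right_cancel₀ hd0 this
    rw [hm1', one_zsmul] at hm2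
    have : c₂.out = c₁.out - (c₁.out - c₂.out) := by abel
    calc c₁ = QuotientAddGroup.mk c₁.out := (QuotientAddGroup.out_eq' c₁).symm
      _ = QuotientAddGroup.mk c₂.out := by
          rw [QuotientAddGroup.eq]
          simpa [neg_add_eq_sub] using neg_mem hm2
      _ = c₂ := QuotientAddGroup.out_eq' c₂
  subst hc
  rfl

lemma bijF_surjective : Function.Surjective (bijF (A := A)) := by
  rintro ⟨H, hH⟩
  obtain ⟨d, w, hdw⟩ := exists_build H hH
  set H₀ := H.comap (AddMonoidHom.inl A ℤ) with hH₀
  have h₀ : H₀.index ≠ 0 := by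
    intro h
    apply hH
    rw [hdw, index_build, h, zero_mul]
  refine ⟨⟨⟨H₀, h₀⟩, d, QuotientAddGroup.mk w⟩, Subtype.ext ?_⟩
  show build H₀ d (QuotientAddGroup.mk w).out = H
  rw [hdw]
  apply build_congr
  have := QuotientAddGroup.out_eq' (QuotientAddGroup.mk (s := H₀) w)
  rw [QuotientAddGroup.eq] at this
  have h2 := neg_mem this
  simpa [neg_add_eq_sub] using h2

/-- The parametrization of finite-index subgroups of `A × ℤ`. -/
noncomputable def sigEquiv : SigT A ≃ {H : AddSubgroup (A × ℤ) // H.index ≠ 0} :=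
  Equiv.ofBijective bijF ⟨bijF_injective, bijF_surjective⟩

lemma index_sigEquiv (t : SigT A) :
    ((sigEquiv t : AddSubgroup (A × ℤ)).index : ℝ) = (t.1.1.index : ℝ) * ((t.2.1 : ℕ) : ℝ) := by
  show (((bijF t : AddSubgroup (A × ℤ))).index : ℝ) = _
  rw [show (bijF t : AddSubgroup (A × ℤ)) = build t.1.1 t.2.1 t.2.2.out from rfl, index_build]
  push_cast
  ring

end SubZeta

namespace SubZeta

variable {A : Type*} [AddCommGroup A]

lemma zr_summable {t : ℝ} (ht : 1 < t) : Summable (fun n : ℕ+ => ((n : ℕ) : ℝ) ^ (-t)) := by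
  have h : Summable (fun n : ℕ => (n : ℝ) ^ (-t)) :=
    Real.summable_nat_rpow.mpr (by linarith)
  exact h.comp_injective (fun a b h => PNat.coe_injective h)

lemma step (s : ℝ) (hs1 : 1 < s)
    (hsum : Summable (fun H₀ : AddSubgroup A => ((H₀.index : ℝ)) ^ (-(s-1)))) :
    Summable (fun H : AddSubgroup (A × ℤ) => ((H.index : ℝ)) ^ (-s)) ∧
    ∑' H : AddSubgroup (A × ℤ), ((H.index : ℝ)) ^ (-s)
      = (∑' n : ℕ+, ((n : ℕ) : ℝ) ^ (-s)) *
        ∑' H₀ : AddSubgroup A, ((H₀.index : ℝ)) ^ (-(s-1)) := by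
  have hs0 : -s ≠ 0 := by intro h; rw [neg_eq_zero] at h; linarith
  have hs1' : -(s - 1) ≠ 0 := by intro h; rw [neg_eq_zero] at h; linarith
  set f : AddSubgroup (A × ℤ) → ℝ := fun H => ((H.index : ℝ)) ^ (-s) with hf
  set f₀ : AddSubgroup A → ℝ := fun H₀ => ((H₀.index : ℝ)) ^ (-(s-1)) with hf₀
  have hsupp : Function.support f ⊆ {H | H.index ≠ 0} := by
    intro H hH
    simp only [Set.mem_setOf_eq]
    intro h0
    apply hH
    simp only [hf, h0, Nat.cast_zero]
    exact Real.zero_rpow hs0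
  have hsupp₀ : Function.support f₀ ⊆ {H₀ : AddSubgroup A | H₀.index ≠ 0} := by
    intro H hH
    simp only [Set.mem_setOf_eq]
    intro h0
    apply hH
    simp only [hf₀, h0, Nat.cast_zero]
    exact Real.zero_rpow hs1'
  set g : SigT A → ℝ := fun t => f (sigEquiv t) with hg
  haveI hfin : ∀ H₀ : {H₀ : AddSubgroup A // H₀.index ≠ 0},
      Finite (A ⧸ (H₀ : AddSubgroup A)) := fun H₀ => (Nat.card_ne_zero.mp H₀.2).2
  -- rewrite g explicitly
  have hgval : ∀ (H₀ : {H₀ : AddSubgroup A // H₀.index ≠ 0})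
      (p : ℕ+ × (A ⧸ (H₀ : AddSubgroup A))),
      g ⟨H₀, p⟩ = (((H₀ : AddSubgroup A).index : ℝ)) ^ (-s) * ((p.1 : ℕ) : ℝ) ^ (-s) := by
    intro H₀ p
    show ((((sigEquiv ⟨H₀, p⟩ : AddSubgroup (A × ℤ))).index : ℝ)) ^ (-s) = _
    rw [index_sigEquiv ⟨H₀, p⟩, Real.mul_rpow (by positivity) (by positivity)]
  have hzs : Summable (fun n : ℕ+ => ((n : ℕ) : ℝ) ^ (-s)) := zr_summable hs1
  -- summability on each fiber
  have hfib : ∀ H₀ : {H₀ : AddSubgroup A // H₀.index ≠ 0},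
      Summable (fun p : ℕ+ × (A ⧸ (H₀ : AddSubgroup A)) => g ⟨H₀, p⟩) := by
    intro H₀
    haveI := Fintype.ofFinite (A ⧸ (H₀ : AddSubgroup A))
    rw [show (fun p : ℕ+ × (A ⧸ (H₀ : AddSubgroup A)) => g ⟨H₀, p⟩)
        = fun p => (((H₀ : AddSubgroup A).index : ℝ)) ^ (-s) * ((p.1 : ℕ) : ℝ) ^ (-s)
        from funext fun p => hgval H₀ p]
    set c : ℝ := (((H₀ : AddSubgroup A).index : ℝ)) ^ (-s) with hc
    refine (summable_prod_of_nonneg ?_).mpr ⟨fun d => Summable.of_finite, ?_⟩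
    · intro p; positivity
    · have hrw : (fun d : ℕ+ => ∑' _ : (A ⧸ (H₀ : AddSubgroup A)), c * ((d : ℕ) : ℝ) ^ (-s))
          = fun d : ℕ+ => (Fintype.card (A ⧸ (H₀ : AddSubgroup A)) : ℝ) * (c * ((d : ℕ) : ℝ) ^ (-s)) := by
        funext d
        rw [tsum_fintype, Finset.sum_const, Finset.card_univ, nsmul_eq_mul]
      rw [hrw]
      exact ((hzs.mul_left c).mul_left _)
  -- value of each fiber sum
  have hfibsum : ∀ H₀ : {H₀ : AddSubgroup A // H₀.index ≠ 0},
      ∑' p : ℕ+ × (A ⧸ (H₀ : AddSubgroup A)), g ⟨H₀, p⟩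
        = (∑' n : ℕ+, ((n : ℕ) : ℝ) ^ (-s)) * f₀ (H₀ : AddSubgroup A) := by
    intro H₀
    haveI := Fintype.ofFinite (A ⧸ (H₀ : AddSubgroup A))
    set c : ℝ := (((H₀ : AddSubgroup A).index : ℝ)) ^ (-s) with hc
    have hpos : (0 : ℝ) < (((H₀ : AddSubgroup A).index : ℝ)) := by
      exact_mod_cast Nat.pos_of_ne_zero H₀.2
    have hcard : (Fintype.card (A ⧸ (H₀ : AddSubgroup A)) : ℝ)
        = (((H₀ : AddSubgroup A).index : ℝ)) := by
      norm_cast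
      rw [← Nat.card_eq_fintype_card]
      rfl
    calc ∑' p : ℕ+ × (A ⧸ (H₀ : AddSubgroup A)), g ⟨H₀, p⟩
        = ∑' (d : ℕ+) (q : A ⧸ (H₀ : AddSubgroup A)), g ⟨H₀, (d, q)⟩ :=
          Summable.tsum_prod' (hfib H₀) (fun d => Summable.of_finite)
      _ = ∑' (d : ℕ+), (Fintype.card (A ⧸ (H₀ : AddSubgroup A)) : ℝ)
            * (c * ((d : ℕ) : ℝ) ^ (-s)) := by
          refine tsum_congr fun d => ?_
          rw [show (fun q : A ⧸ (H₀ : AddSubgroup A) => g ⟨H₀, (d, q)⟩)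
              = fun _ => c * ((d : ℕ) : ℝ) ^ (-s) from funext fun q => hgval H₀ (d, q)]
          rw [tsum_fintype, Finset.sum_const, Finset.card_univ, nsmul_eq_mul]
      _ = (Fintype.card (A ⧸ (H₀ : AddSubgroup A)) : ℝ) * (c * ∑' (d : ℕ+), ((d : ℕ) : ℝ) ^ (-s)) := by
          rw [tsum_mul_left, tsum_mul_left]
      _ = (∑' n : ℕ+, ((n : ℕ) : ℝ) ^ (-s)) * f₀ (H₀ : AddSubgroup A) := by
          rw [hcard, hf₀, hc]
          have hE : (((H₀ : AddSubgroup A).index : ℝ)) * (((H₀ : AddSubgroup A).index : ℝ)) ^ (-s)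
              = (((H₀ : AddSubgroup A).index : ℝ)) ^ (-(s - 1)) := by
            rw [show -(s - 1) = 1 + -s by ring, Real.rpow_add hpos, Real.rpow_one]
          rw [← mul_assoc, hE, mul_comm]
  have hgnn : ∀ t : SigT A, 0 ≤ g t := by
    rintro ⟨H₀, p⟩
    rw [hgval]
    positivity
  have hgsum : Summable g := by
    refine (summable_sigma_of_nonneg hgnn).mpr ⟨hfib, ?_⟩
    rw [show (fun H₀ : {H₀ : AddSubgroup A // H₀.index ≠ 0} =>
        ∑' p : ℕ+ × (A ⧸ (H₀ : AddSubgroup A)), g ⟨H₀, p⟩)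
        = fun H₀ : {H₀ : AddSubgroup A // H₀.index ≠ 0} =>
            (∑' n : ℕ+, ((n : ℕ) : ℝ) ^ (-s)) * f₀ H₀.val
        from funext hfibsum]
    exact (hsum.subtype _).mul_left _
  have hsummand : Summable (fun H : {H : AddSubgroup (A × ℤ) | H.index ≠ 0} => f H.val) := by
    exact (Equiv.summable_iff (f := fun H : {H : AddSubgroup (A × ℤ) // H.index ≠ 0} => f H.val)
      (sigEquiv (A := A))).mp hgsum
  have hSf : Summable f := by
    rw [← Set.indicator_eq_self.mpr hsupp]
    exact summable_subtype_iff_indicator.mp hsummand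
  refine ⟨hSf, ?_⟩
  calc ∑' H : AddSubgroup (A × ℤ), f H
      = ∑' H : {H : AddSubgroup (A × ℤ) | H.index ≠ 0}, f H.val :=
        (tsum_subtype_eq_of_support_subset hsupp).symm
    _ = ∑' t : SigT A, g t := ((sigEquiv (A := A)).tsum_eq _).symm
    _ = ∑' (H₀ : {H₀ : AddSubgroup A // H₀.index ≠ 0}),
          ∑' p : ℕ+ × (A ⧸ (H₀ : AddSubgroup A)), g ⟨H₀, p⟩ := Summable.tsum_sigma hgsum
    _ = ∑' (H₀ : {H₀ : AddSubgroup A // H₀.index ≠ 0}),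
          (∑' n : ℕ+, ((n : ℕ) : ℝ) ^ (-s)) * f₀ (H₀ : AddSubgroup A) := tsum_congr hfibsum
    _ = (∑' n : ℕ+, ((n : ℕ) : ℝ) ^ (-s)) *
          ∑' (H₀ : {H₀ : AddSubgroup A | H₀.index ≠ 0}), f₀ (H₀ : AddSubgroup A) := tsum_mul_left
    _ = (∑' n : ℕ+, ((n : ℕ) : ℝ) ^ (-s)) * ∑' H₀ : AddSubgroup A, f₀ H₀ := by
        rw [tsum_subtype_eq_of_support_subset hsupp₀]

end SubZeta

namespace SubZeta

noncomputable def zr (t : ℝ) : ℝ := ∑' n : ℕ+, ((n : ℕ) : ℝ) ^ (-t)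

variable {G G' : Type*} [AddCommGroup G] [AddCommGroup G']

lemma index_map_addEquiv (e : G ≃+ G') (H : AddSubgroup G) :
    (H.map (e : G →+ G')).index = H.index := by
  have h1 : (e : G →+ G').ker = ⊥ := (AddMonoidHom.ker_eq_bot_iff _).mpr e.injective
  have h2 : (e : G →+ G').range = ⊤ := AddMonoidHom.range_eq_top.mpr e.surjective
  rw [AddSubgroup.index_map, h1, h2, sup_bot_eq, AddSubgroup.index_top, mul_one]

/-- An isomorphism of additive groups induces an equivalence of subgroup lattices. -/
def subgroupCongr (e : G ≃+ G') : AddSubgroup G ≃ AddSubgroup G' where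
  toFun H := H.map (e : G →+ G')
  invFun H := H.map (e.symm : G' →+ G)
  left_inv H := by simp [AddSubgroup.map_map]
  right_inv H := by simp [AddSubgroup.map_map]

lemma transport (e : G ≃+ G') (s : ℝ)
    (h : Summable (fun H : AddSubgroup G => ((H.index : ℝ)) ^ (-s))) :
    Summable (fun H : AddSubgroup G' => ((H.index : ℝ)) ^ (-s)) ∧
    ∑' H : AddSubgroup G', ((H.index : ℝ)) ^ (-s)
      = ∑' H : AddSubgroup G, ((H.index : ℝ)) ^ (-s) := by
  have key : ∀ H : AddSubgroup G,
      (((subgroupCongr e H).index : ℝ)) ^ (-s) = ((H.index : ℝ)) ^ (-s) := by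
    intro H
    have : (subgroupCongr e H).index = H.index := index_map_addEquiv e H
    rw [this]
  constructor
  · rw [← (subgroupCongr e).summable_iff]
    exact h.congr fun H => (key H).symm
  · rw [← (subgroupCongr e).tsum_eq (fun H : AddSubgroup G' => ((H.index : ℝ)) ^ (-s))]
    exact tsum_congr key

/-- The additive equivalence `ℤ^(k+1) ≃ ℤ^k × ℤ`. -/
def piSuccAddEquiv (k : ℕ) : (Fin (k + 1) → ℤ) ≃+ (Fin k → ℤ) × ℤ where
  toFun f := (fun i => f i.succ, f 0)
  invFun p := Fin.cons p.2 p.1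
  left_inv f := by
    funext i
    refine Fin.cases ?_ (fun j => ?_) i <;> simp
  right_inv p := by
    refine Prod.ext ?_ ?_ <;> simp
  map_add' f g := rfl

lemma aux (k : ℕ) : ∀ s : ℝ, (k : ℝ) < s →
    Summable (fun H : AddSubgroup (Fin k → ℤ) => ((H.index : ℝ)) ^ (-s)) ∧
    ∑' H : AddSubgroup (Fin k → ℤ), ((H.index : ℝ)) ^ (-s)
      = ∏ i ∈ Finset.range k, zr (s - i) := by
  induction k with
  | zero =>
    intro s hs
    haveI : Subsingleton (AddSubgroup (Fin 0 → ℤ)) := by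
      constructor
      intro H K
      ext x
      rw [Subsingleton.elim x 0]
      exact iff_of_true (zero_mem H) (zero_mem K)
    have hidx : ∀ H : AddSubgroup (Fin 0 → ℤ), H.index = 1 := by
      intro H
      have : Subsingleton ((Fin 0 → ℤ) ⧸ H) := Quotient.instSubsingletonQuotient _
      exact Nat.card_of_subsingleton (0 : (Fin 0 → ℤ) ⧸ H)
    constructor
    · apply Summable.of_finite
    · rw [Finset.range_zero, Finset.prod_empty]
      rw [tsum_eq_single (⊥ : AddSubgroup (Fin 0 → ℤ))
        (fun H h => absurd (Subsingleton.elim H ⊥) h)]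
      rw [hidx ⊥]
      norm_num
  | succ k IH =>
    intro s hs
    have hs1 : 1 < s := by
      have h0 : (0 : ℝ) ≤ (k : ℝ) := Nat.cast_nonneg k
      push_cast at hs
      linarith
    have hk : (k : ℝ) < s - 1 := by push_cast at hs; linarith
    obtain ⟨ihS, ihT⟩ := IH (s - 1) hk
    obtain ⟨stS, stT⟩ := step s hs1 ihS
    obtain ⟨trS, trT⟩ := transport (piSuccAddEquiv k).symm s stS
    refine ⟨trS, ?_⟩
    rw [trT, stT, ihT]
    have this1 : ∀ i ∈ Finset.range k, zr (s - 1 - (i : ℕ)) = zr (s - ((i + 1 : ℕ) : ℝ)) := by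
      intro i _
      congr 1
      push_cast
      ring
    calc zr s * ∏ i ∈ Finset.range k, zr (s - 1 - (i : ℕ))
        = zr s * ∏ i ∈ Finset.range k, zr (s - ((i + 1 : ℕ) : ℝ)) := by
          rw [Finset.prod_congr rfl this1]
      _ = (∏ i ∈ Finset.range k, zr (s - ((i + 1 : ℕ) : ℝ))) * zr (s - ((0 : ℕ) : ℝ)) := by
          rw [Nat.cast_zero, sub_zero, mul_comm]
      _ = ∏ i ∈ Finset.range (k + 1), zr (s - (i : ℕ)) := (Finset.prod_range_succ' (fun i => zr (s - (i : ℕ))) k).symm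

end SubZeta

namespace SubZeta

lemma zr_eq_riemannZeta {t : ℝ} (ht : 1 < t) : ((zr t : ℝ) : ℂ) = riemannZeta t := by
  rw [zeta_eq_tsum_one_div_nat_cpow (by rwa [Complex.ofReal_re] : 1 < Complex.re t)]
  rw [zr, Complex.ofReal_tsum]
  have hinj : Function.Injective (fun n : ℕ+ => (n : ℕ)) := fun a b h => PNat.coe_injective h
  have hsupp : Function.support (fun n : ℕ => 1 / (n : ℂ) ^ (t : ℂ)) ⊆
      Set.range (fun n : ℕ+ => (n : ℕ)) := by
    intro n hn
    rcases Nat.eq_zero_or_pos n with h0 | h0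
    · exfalso
      apply hn
      rw [h0]
      simp only [Nat.cast_zero]
      rw [Complex.zero_cpow (by exact_mod_cast (by linarith : t ≠ 0))]
      simp
    · exact ⟨⟨n, h0⟩, rfl⟩
  rw [← Function.Injective.tsum_eq hinj hsupp]
  refine tsum_congr fun n => ?_
  show (((((n : ℕ) : ℝ)) ^ (-t) : ℝ) : ℂ) = 1 / ((n : ℕ) : ℂ) ^ (t : ℂ)
  rw [Complex.ofReal_cpow (Nat.cast_nonneg _), Complex.ofReal_neg, Complex.cpow_neg]
  push_cast
  rw [one_div]

end SubZeta

/-- For `k ≥ 1` and real `s > k`, the sum over all finite-index subgroups `H` of `ℤ^k`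
of `[ℤ^k : H]^{-s}` converges and equals `ζ(s) ζ(s-1) ⋯ ζ(s-k+1)`.
Subgroups of infinite index have `index = 0` and contribute `0^{-s} = 0`. -/
theorem stmt0 (k : ℕ) (hk : 1 ≤ k) (s : ℝ) (hs : (k : ℝ) < s) :
    Summable (fun H : AddSubgroup (Fin k → ℤ) => (H.index : ℝ) ^ (-s)) ∧
    ((∑' H : AddSubgroup (Fin k → ℤ), (H.index : ℝ) ^ (-s) : ℝ) : ℂ) =
      ∏ i ∈ Finset.range k, riemannZeta ((s : ℂ) - (i : ℕ)) := by
  obtain ⟨h1, h2⟩ := SubZeta.aux k s hs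
  refine ⟨h1, ?_⟩
  rw [h2, Complex.ofReal_prod]
  refine Finset.prod_congr rfl fun i hi => ?_
  have hik : (i : ℝ) ≤ (k : ℝ) - 1 := by
    have : i + 1 ≤ k := Finset.mem_range.mp hi
    have := (Nat.cast_le (α := ℝ)).mpr this
    push_cast at this
    linarith
  have h1i : 1 < s - (i : ℕ) := by linarith
  rw [SubZeta.zr_eq_riemannZeta h1i]
  congr 1
  push_cast
  ring
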